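/- If u : A ⥤ B and v : B ⥤ C are aspheric functors between small categories, then the composite v ∘ u : A ⥤ C is aspheric. -/

import Mathlib

open CategoryTheory Limits

namespace Paper

/-- A right asphericity structure: a class of small categories satisfying (As1): every
small category having a terminal object belongs to the class, and (As2): if `u : A ⥤ B`
is a functor with `B` in the class and all comma categories `A/b` in the class, then `A`
is in the class. -/
def IsRightAsphericityStructure (𝒜 : Set Cat.{0,0}) : Prop :=
  (∀ C : Cat.{0,0}, HasTerminal C → C ∈ 𝒜) ∧
  (∀ (A B : Cat.{0,0}) (u : A ⥤ B), B ∈ 𝒜 →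
    (∀ b : B, Cat.of (CostructuredArrow u b) ∈ 𝒜) → A ∈ 𝒜)

/-- A functor between small categories is aspheric (w.r.t. a class 𝒜 of small
categories) if all its comma categories `A/b` belong to 𝒜. -/
def Aspheric (𝒜 : Set Cat.{0,0}) {A B : Cat.{0,0}} (u : A ⥤ B) : Prop :=
  ∀ b : B, Cat.of (CostructuredArrow u b) ∈ 𝒜

section Aux

variable {A B C : Cat.{0,0}} (u : A ⥤ B) (v : B ⥤ C) {c : C} (X : CostructuredArrow v c)

/-- Forward functor of the equivalence `A/b ≌ (A/c)/(b,g)`. -/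
@[simps]
def fwd : CostructuredArrow u X.left ⥤ CostructuredArrow (CostructuredArrow.pre u v c) X where
  obj Y := CostructuredArrow.mk
    (Y := CostructuredArrow.mk (Y := Y.left) (v.map Y.hom ≫ X.hom))
    (CostructuredArrow.homMk Y.hom (by simp))
  map {Y Z} k := CostructuredArrow.homMk
    (CostructuredArrow.homMk k.left
      (by dsimp; rw [← Category.assoc, ← v.map_comp, CostructuredArrow.w k])) (by ext; simp)

/-- Backward functor of the equivalence. -/
@[simps]
def bwd : CostructuredArrow (CostructuredArrow.pre u v c) X ⥤ CostructuredArrow u X.left where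
  obj Z := CostructuredArrow.mk (Y := Z.left.left) Z.hom.left
  map {Y Z} k := CostructuredArrow.homMk k.left.left
    (congrArg CategoryTheory.CommaMorphism.left (CostructuredArrow.w k))

/-- The equivalence `A/b ≌ (A/c)/(b,g)`. -/
noncomputable def fwdEquiv :
    CostructuredArrow u X.left ≌ CostructuredArrow (CostructuredArrow.pre u v c) X := by
  refine CategoryTheory.Equivalence.mk (fwd u v X) (bwd u v X)
    (NatIso.ofComponents (fun Y => CostructuredArrow.isoMk (Iso.refl _) (by dsimp [fwd, bwd]; simp)) ?_)
    (NatIso.ofComponents (fun Z => CostructuredArrow.isoMk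
      (CostructuredArrow.isoMk (Iso.refl _) (by dsimp [fwd, bwd]; simp [Z.hom.w])) ?_) ?_)
  · intros; ext; simp [fwd, bwd]
  · ext; simp [fwd, bwd]
  · intros; ext; simp [fwd, bwd]

lemma mem_of_isEquivalence (𝒜 : Set Cat.{0,0}) (h𝒜 : IsRightAsphericityStructure 𝒜)
    {A B : Cat.{0,0}} (e : A ⥤ B) [e.IsEquivalence] (hB : B ∈ 𝒜) : A ∈ 𝒜 := by
  refine h𝒜.2 A B e hB (fun b => h𝒜.1 _ ?_)
  exact isLeftAdjoint_iff_hasTerminal_costructuredArrow.mp inferInstance b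

end Aux

/-- The composition of two aspheric functors is aspheric. -/
theorem aspheric_comp (𝒜 : Set Cat.{0,0}) (h𝒜 : IsRightAsphericityStructure 𝒜)
    {A B C : Cat.{0,0}} (u : A ⥤ B) (v : B ⥤ C)
    (hu : Aspheric 𝒜 u) (hv : Aspheric 𝒜 v) : Aspheric 𝒜 (u ⋙ v) := by
  intro c
  refine h𝒜.2 (Cat.of (CostructuredArrow (u ⋙ v) c)) (Cat.of (CostructuredArrow v c))
    (CostructuredArrow.pre u v c) (hv c) (fun X => ?_)
  have key : ∀ X : CostructuredArrow v c,
      Cat.of (CostructuredArrow (CostructuredArrow.pre u v c) X) ∈ 𝒜 := fun X => by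
    have : ((fwdEquiv u v X).inverse).IsEquivalence := (fwdEquiv u v X).isEquivalence_inverse
    exact @mem_of_isEquivalence 𝒜 h𝒜 (Cat.of (CostructuredArrow (CostructuredArrow.pre u v c) X))
      (Cat.of (CostructuredArrow u X.left)) (fwdEquiv u v X).inverse this (hu X.left)
  exact key X

end Paper
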